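/- Let ν be a probability measure on [0,∞) with finite second moment that is not the Dirac measure at 0. Then there exists a probability measure ν' on [0,∞) with finite second moment such that ν is a midpoint of δ₀ and ν' in the 2-Wasserstein space P₂([0,∞)). -/

import Mathlib

open MeasureTheory
open scoped NNReal

/-- The `p`-Wasserstein distance associated to a cost (distance) function `d`,
defined as the infimum over transport plans of the `p`-th root of the transport cost. -/
noncomputable def Wp {Z : Type*} [MeasurableSpace Z] (d : Z → Z → ℝ) (p : ℝ)
    (μ ν : Measure Z) : ℝ :=
  sInf {c : ℝ | ∃ γ : Measure (Z × Z), IsProbabilityMeasure γ ∧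
    γ.map Prod.fst = μ ∧ γ.map Prod.snd = ν ∧
    c = (∫ z, d z.1 z.2 ^ p ∂γ) ^ (1 / p)}

lemma distsq_meas : AEStronglyMeasurable
    (fun z : ℝ≥0 × ℝ≥0 => dist z.1 z.2 ^ (2:ℝ)) (γ : Measure (ℝ≥0 × ℝ≥0)) := by
  apply Continuous.aestronglyMeasurable
  exact (continuous_fst.dist continuous_snd).rpow_const (fun z => Or.inr (by norm_num))

lemma wp_dirac_eq (μ : Measure ℝ≥0) [IsProbabilityMeasure μ] :
    Wp (fun a b : ℝ≥0 => dist a b) 2 (Measure.dirac 0) μ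
      = Real.sqrt (∫ t, (t : ℝ) ^ 2 ∂μ) := by
  have hd0 : ∀ t : ℝ≥0, dist (0 : ℝ≥0) t = (t : ℝ) := by
    intro t; simp [NNReal.dist_eq]
  have hm : Measurable (fun t : ℝ≥0 => ((0:ℝ≥0), t)) := measurable_const.prodMk measurable_id
  have hset : {c : ℝ | ∃ γ : Measure (ℝ≥0 × ℝ≥0), IsProbabilityMeasure γ ∧
      γ.map Prod.fst = Measure.dirac 0 ∧ γ.map Prod.snd = μ ∧
      c = (∫ z, dist z.1 z.2 ^ (2:ℝ) ∂γ) ^ ((1:ℝ) / 2)}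
      = {Real.sqrt (∫ t, (t : ℝ) ^ 2 ∂μ)} := by
    apply Set.eq_singleton_iff_unique_mem.mpr
    constructor
    · refine ⟨μ.map (fun t => ((0:ℝ≥0), t)), ?_, ?_, ?_, ?_⟩
      · exact Measure.isProbabilityMeasure_map hm.aemeasurable
      · rw [Measure.map_map measurable_fst hm]
        simp [Function.comp_def, Measure.map_const]
      · rw [Measure.map_map measurable_snd hm]
        simp [Function.comp_def]
      · rw [integral_map hm.aemeasurable distsq_meas]
        simp only [hd0, Real.rpow_two, ← Real.sqrt_eq_rpow]
    · rintro c ⟨γ, hγp, hfst, hsnd, rfl⟩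
      have hae : ∀ᵐ z ∂γ, z.1 = (0:ℝ≥0) := by
        have h0 : γ.map Prod.fst ({0}ᶜ : Set ℝ≥0) = 0 := by
          rw [hfst, Measure.dirac_apply' _ (measurableSet_singleton (0:ℝ≥0)).compl]
          simp
        rw [Measure.map_apply measurable_fst (measurableSet_singleton (0:ℝ≥0)).compl] at h0
        rw [ae_iff]
        convert h0 using 2
        rfl
      have h1 : (∫ z, dist z.1 z.2 ^ (2:ℝ) ∂γ) = ∫ z : ℝ≥0 × ℝ≥0, (z.2:ℝ)^2 ∂γ := by
        apply integral_congr_ae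
        filter_upwards [hae] with z hz
        rw [hz, hd0, Real.rpow_two]
      have h2 : (∫ z : ℝ≥0 × ℝ≥0, (z.2:ℝ)^2 ∂γ) = ∫ t, (t:ℝ)^2 ∂μ := by
        rw [← hsnd, integral_map measurable_snd.aemeasurable]
        exact (NNReal.continuous_coe.pow 2).aestronglyMeasurable
      rw [h1, h2, ← Real.sqrt_eq_rpow]
  unfold Wp
  rw [hset, csInf_singleton]

lemma wp_double (ν : Measure ℝ≥0) [IsProbabilityMeasure ν]
    (hmom : Integrable (fun t : ℝ≥0 => (t : ℝ) ^ 2) ν) :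
    Wp (fun a b : ℝ≥0 => dist a b) 2 ν (ν.map (fun t => 2 * t))
      = Real.sqrt (∫ t, (t : ℝ) ^ 2 ∂ν) := by
  set M : ℝ := ∫ t, (t : ℝ) ^ 2 ∂ν with hM
  have hMnn : 0 ≤ M := integral_nonneg (fun t => sq_nonneg _)
  have hm2 : Measurable (fun t : ℝ≥0 => 2 * t) := measurable_const_mul 2
  have hm : Measurable (fun t : ℝ≥0 => (t, 2 * t)) := measurable_id.prodMk hm2
  have hdist : ∀ z : ℝ≥0 × ℝ≥0, dist z.1 z.2 ^ (2:ℝ) = ((z.1:ℝ) - (z.2:ℝ)) ^ 2 := by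
    intro z; rw [Real.rpow_two, NNReal.dist_eq, sq_abs]
  -- the canonical coupling
  have hmem : Real.sqrt M ∈ {c : ℝ | ∃ γ : Measure (ℝ≥0 × ℝ≥0), IsProbabilityMeasure γ ∧
      γ.map Prod.fst = ν ∧ γ.map Prod.snd = ν.map (fun t => 2 * t) ∧
      c = (∫ z, dist z.1 z.2 ^ (2:ℝ) ∂γ) ^ ((1:ℝ) / 2)} := by
    refine ⟨ν.map (fun t => (t, 2 * t)), Measure.isProbabilityMeasure_map hm.aemeasurable, ?_, ?_, ?_⟩
    · rw [Measure.map_map measurable_fst hm]; simp [Function.comp_def]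
    · rw [Measure.map_map measurable_snd hm]; simp [Function.comp_def]
    · rw [integral_map hm.aemeasurable distsq_meas]
      have : ∀ t : ℝ≥0, dist t (2 * t) ^ (2:ℝ) = (t:ℝ)^2 := by
        intro t
        rw [hdist (t, 2*t)]
        push_cast
        ring
      simp only [this, ← hM, ← Real.sqrt_eq_rpow]
  apply le_antisymm
  · exact csInf_le ⟨0, by
      rintro c ⟨γ, _, _, _, rfl⟩
      exact Real.rpow_nonneg (integral_nonneg fun z =>
        Real.rpow_nonneg dist_nonneg 2) _⟩ hmem
  · apply le_csInf ⟨_, hmem⟩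
    rintro c ⟨γ, hγp, hfst, hsnd, rfl⟩
    -- integrability of marginals' second moments
    have hint1 : Integrable (fun z : ℝ≥0 × ℝ≥0 => (z.1 : ℝ) ^ 2) γ := by
      have := hmom
      rw [← hfst] at this
      exact (integrable_map_measure (NNReal.continuous_coe.pow 2).aestronglyMeasurable
        measurable_fst.aemeasurable).mp this
    have hint2 : Integrable (fun z : ℝ≥0 × ℝ≥0 => (z.2 : ℝ) ^ 2) γ := by
      have h4 : Integrable (fun t : ℝ≥0 => ((2 * t : ℝ≥0) : ℝ) ^ 2) ν := by
        have := hmom.const_mul 4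
        apply this.congr
        filter_upwards with t
        push_cast; ring
      have : Integrable (fun t : ℝ≥0 => (t : ℝ) ^ 2) (ν.map (fun t => 2 * t)) :=
        (integrable_map_measure (NNReal.continuous_coe.pow 2).aestronglyMeasurable
          hm2.aemeasurable).mpr h4
      rw [← hsnd] at this
      exact (integrable_map_measure (NNReal.continuous_coe.pow 2).aestronglyMeasurable
        measurable_snd.aemeasurable).mp this
    have hintd : Integrable (fun z : ℝ≥0 × ℝ≥0 => dist z.1 z.2 ^ (2:ℝ)) γ := by
      apply Integrable.mono' ((hint1.const_mul 2).add (hint2.const_mul 2)) distsq_meas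
      filter_upwards with z
      rw [Real.norm_eq_abs, abs_of_nonneg (Real.rpow_nonneg dist_nonneg 2), hdist z]
      show _ ≤ 2 * (z.1:ℝ)^2 + 2 * (z.2:ℝ)^2
      nlinarith [sq_nonneg ((z.1:ℝ) + z.2), sq_nonneg ((z.1:ℝ) - z.2)]
    -- the moment values under γ
    have hI1 : (∫ z : ℝ≥0 × ℝ≥0, (z.1:ℝ)^2 ∂γ) = M := by
      rw [hM, ← hfst, integral_map measurable_fst.aemeasurable (f := fun t : ℝ≥0 => (t:ℝ)^2)
        (NNReal.continuous_coe.pow 2).aestronglyMeasurable]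
    have hI2 : (∫ z : ℝ≥0 × ℝ≥0, (z.2:ℝ)^2 ∂γ) = 4 * M := by
      have e1 : (∫ t, (t:ℝ)^2 ∂(γ.map Prod.snd)) = ∫ z : ℝ≥0 × ℝ≥0, (z.2:ℝ)^2 ∂γ :=
        integral_map measurable_snd.aemeasurable
          (NNReal.continuous_coe.pow 2).aestronglyMeasurable
      rw [← e1, hsnd,
        integral_map hm2.aemeasurable (f := fun t : ℝ≥0 => (t:ℝ)^2) (NNReal.continuous_coe.pow 2).aestronglyMeasurable, hM,
        ← MeasureTheory.integral_const_mul]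
      apply integral_congr_ae
      filter_upwards with t
      push_cast; ring
    have hlow : M ≤ ∫ z, dist z.1 z.2 ^ (2:ℝ) ∂γ := by
      have hle : ∀ z : ℝ≥0 × ℝ≥0, (z.2:ℝ)^2 / 2 - (z.1:ℝ)^2 ≤ dist z.1 z.2 ^ (2:ℝ) := by
        intro z
        rw [hdist z]
        nlinarith [sq_nonneg (2 * (z.1:ℝ) - z.2)]
      have hA : Integrable (fun z : ℝ≥0 × ℝ≥0 => (z.2:ℝ)^2 / 2) γ := hint2.div_const 2
      have hAB : Integrable (fun z : ℝ≥0 × ℝ≥0 => (z.2:ℝ)^2 / 2 - (z.1:ℝ)^2) γ :=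
        hA.sub hint1
      have h := integral_mono hAB hintd hle
      rw [integral_sub hA hint1, integral_div, hI1, hI2] at h
      linarith
    calc Real.sqrt M = M ^ ((1:ℝ)/2) := Real.sqrt_eq_rpow M
      _ ≤ (∫ z, dist z.1 z.2 ^ (2:ℝ) ∂γ) ^ ((1:ℝ)/2) :=
        Real.rpow_le_rpow hMnn hlow (by norm_num)

/-- Any probability measure `ν ≠ δ₀` on `[0,∞)` with finite second moment is a midpoint
between `δ₀` and some measure `ν'` in the 2-Wasserstein space `P₂([0,∞))`. -/
theorem stmt_4 (ν : Measure ℝ≥0) [IsProbabilityMeasure ν]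
    (hmom : Integrable (fun t : ℝ≥0 => (t : ℝ) ^ 2) ν)
    (hν : ν ≠ Measure.dirac 0) :
    ∃ ν' : Measure ℝ≥0, IsProbabilityMeasure ν' ∧
      Integrable (fun t : ℝ≥0 => (t : ℝ) ^ 2) ν' ∧
      Wp (fun a b : ℝ≥0 => dist a b) 2 (Measure.dirac 0) ν =
        Wp (fun a b : ℝ≥0 => dist a b) 2 (Measure.dirac 0) ν' / 2 ∧
      Wp (fun a b : ℝ≥0 => dist a b) 2 ν ν' =
        Wp (fun a b : ℝ≥0 => dist a b) 2 (Measure.dirac 0) ν' / 2 := by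

  have hm2 : Measurable (fun t : ℝ≥0 => 2 * t) := measurable_const_mul 2
  refine ⟨ν.map (fun t => 2 * t), Measure.isProbabilityMeasure_map hm2.aemeasurable, ?_, ?_, ?_⟩
  case refine_1 =>
    refine (integrable_map_measure (NNReal.continuous_coe.pow 2).aestronglyMeasurable
      hm2.aemeasurable).mpr ?_
    apply (hmom.const_mul 4).congr
    filter_upwards with t
    simp only [Function.comp_apply, Pi.pow_apply]; push_cast; ring
  all_goals {
    have hmom' : Integrable (fun t : ℝ≥0 => (t : ℝ) ^ 2) (ν.map (fun t => 2 * t)) := by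
      refine (integrable_map_measure (NNReal.continuous_coe.pow 2).aestronglyMeasurable
        hm2.aemeasurable).mpr ?_
      apply (hmom.const_mul 4).congr
      filter_upwards with t
      simp only [Function.comp_apply, Pi.pow_apply]; push_cast; ring
    have hI : (∫ t : ℝ≥0, (t:ℝ)^2 ∂(ν.map (fun t : ℝ≥0 => 2 * t))) = 4 * ∫ t, (t:ℝ)^2 ∂ν := by
      rw [integral_map hm2.aemeasurable (f := fun t : ℝ≥0 => (t:ℝ)^2) (NNReal.continuous_coe.pow 2).aestronglyMeasurable,
        ← MeasureTheory.integral_const_mul]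
      apply integral_congr_ae
      filter_upwards with t
      push_cast; ring
    have hMnn : 0 ≤ ∫ t, (t:ℝ)^2 ∂ν := integral_nonneg (fun t => sq_nonneg _)
    have h4 : Real.sqrt (4 * ∫ t, (t:ℝ)^2 ∂ν) = 2 * Real.sqrt (∫ t, (t:ℝ)^2 ∂ν) := by
      rw [Real.sqrt_mul (by norm_num : (0:ℝ) ≤ 4),
        show Real.sqrt 4 = 2 by
          rw [show (4:ℝ) = 2 ^ 2 by norm_num, Real.sqrt_sq (by norm_num : (0:ℝ) ≤ 2)]]
    haveI : IsProbabilityMeasure (ν.map (fun t : ℝ≥0 => 2 * t)) :=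
      Measure.isProbabilityMeasure_map hm2.aemeasurable
    rw [wp_dirac_eq (ν.map (fun t : ℝ≥0 => 2 * t)), hI, h4]
    first
      | (rw [wp_dirac_eq ν]; ring)
      | (rw [wp_double ν hmom]; ring)
  }
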